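/- Let A be a finite set with at least 2 elements, B a set, n a positive integer with n ≠ 2, and let A^n_= denote the set of tuples (a_1,...,a_n) in A^n having at least two equal coordinates (with A^1_= = A). If f : A^n_= → B is a partial function whose essential variables are exactly x_1,...,x_m (a variable x_i is essential if there exist two tuples in A^n_= differing only in the i-th coordinate on which f takes different values), then there exists a total function h : A^m → B such that f(a_1,...,a_n) = h(a_1,...,a_m) for all (a_1,...,a_n) in A^n_=. -/

import Mathlib

/-- Variable `i` is essential in `f`. -/
def EssAt {A B : Type*} {n : ℕ} (f : (Fin n → A) → B) (i : Fin n) : Prop :=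
  ∃ a b : Fin n → A, (∀ j, j ≠ i → a j = b j) ∧ f a ≠ f b

/-- The essential arity of `f`: the number of essential variables. -/
noncomputable def essArity {A B : Type*} {n : ℕ} (f : (Fin n → A) → B) : ℕ :=
  Set.ncard {i : Fin n | EssAt f i}

/-- `A^n_=`: tuples with at least two equal coordinates (all of `A` when `n = 1`). -/
def Aneq (A : Type*) (n : ℕ) : Set (Fin n → A) :=
  {a | n = 1 ∨ ∃ i j : Fin n, i ≠ j ∧ a i = a j}

/-- Variable `i` is essential in the restriction of `f` to `S` (witnesses must lie in `S`). -/
def EssAtOn {A B : Type*} {n : ℕ} (f : (Fin n → A) → B) (S : Set (Fin n → A)) (i : Fin n) : Prop :=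
  ∃ a b : Fin n → A, a ∈ S ∧ b ∈ S ∧ (∀ j, j ≠ i → a j = b j) ∧ f a ≠ f b

/-- Essential arity of the restriction of `f` to `S`. -/
noncomputable def essArityOn {A B : Type*} {n : ℕ} (f : (Fin n → A) → B)
    (S : Set (Fin n → A)) : ℕ :=
  Set.ncard {i : Fin n | EssAtOn f S i}

/-- `g` is a support of `f`: they agree on `A^n_=`. -/
def IsSupport {A B : Type*} {n : ℕ} (f g : (Fin n → A) → B) : Prop :=
  ∀ a ∈ Aneq A n, g a = f a

/-- The quasi-arity of `f`: minimum essential arity of a support of `f`. -/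
noncomputable def qarity {A B : Type*} {n : ℕ} (f : (Fin n → A) → B) : ℕ :=
  sInf {m | ∃ g : (Fin n → A) → B, IsSupport f g ∧ essArity g = m}

/-- The variable identification minor `f_{i ← j}`: substitute `x_j` for `x_i`. -/
def idMinor {A B : Type*} {n : ℕ} (f : (Fin n → A) → B) (i j : Fin n) :
    (Fin n → A) → B :=
  fun a => f (Function.update a i (a j))

/-- The arity gap of `f`: minimum of `ess f - ess f_{i←j}` over pairs of distinct
essential variables. -/
noncomputable def arityGap {A B : Type*} {n : ℕ} (f : (Fin n → A) → B) : ℕ :=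
  sInf {d | ∃ i j : Fin n, i ≠ j ∧ EssAt f i ∧ EssAt f j ∧
    d = essArity f - essArity (idMinor f i j)}

theorem stmt0 {A B : Type*} [Fintype A] (h2 : 2 ≤ Fintype.card A) {n m : ℕ}
    (hn : 0 < n) (hn2 : n ≠ 2) (hm : m ≤ n) (f : (Fin n → A) → B)
    (hess : ∀ i : Fin n, EssAtOn f (Aneq A n) i ↔ (i : ℕ) < m) :
    ∃ h : (Fin m → A) → B, ∀ a ∈ Aneq A n, f a = h (fun k => a (Fin.castLE hm k)) := by
  classical
  obtain ⟨x₀⟩ : Nonempty A := Fintype.card_pos_iff.mp (by omega)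
  have step : ∀ (a b : Fin n → A), a ∈ Aneq A n → b ∈ Aneq A n → ∀ i : Fin n, m ≤ (i : ℕ) →
      (∀ j, j ≠ i → a j = b j) → f a = f b := by
    intro a b ha hb i him hdiff
    by_contra hne
    have hE : EssAtOn f (Aneq A n) i := ⟨a, b, ha, hb, hdiff, hne⟩
    have := (hess i).1 hE
    omega
  have key : ∀ a b, a ∈ Aneq A n → b ∈ Aneq A n →
      (∀ k : Fin n, (k : ℕ) < m → a k = b k) → f a = f b := by
    intro a b ha hb hab
    rcases eq_or_lt_of_le hm with hmn | hmn
    · have : a = b := funext fun k => hab k (by omega)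
      rw [this]
    rcases Nat.lt_or_ge (m + 1) n with hq | hq
    · -- at least two free coordinates, n ≥ 3
      have hn3 : 3 ≤ n := by rcases Nat.eq_zero_or_pos m with h0 | h1 <;> omega
      set i₁ : Fin n := ⟨m, by omega⟩ with hi₁
      set i₂ : Fin n := ⟨m + 1, by omega⟩ with hi₂
      have hi12 : i₁ ≠ i₂ := by simp [hi₁, hi₂, Fin.ext_iff]
      obtain ⟨j₀, hj₀1, hj₀2⟩ : ∃ j₀ : Fin n, j₀ ≠ i₁ ∧ j₀ ≠ i₂ := by
        have hv : ∃ v : ℕ, v < n ∧ v ≠ m ∧ v ≠ m + 1 := by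
          rcases Nat.eq_zero_or_pos m with h0 | h1
          · exact ⟨2, by omega, by omega, by omega⟩
          · exact ⟨0, by omega, by omega, by omega⟩
        obtain ⟨v, hv1, hv2, hv3⟩ := hv
        exact ⟨⟨v, hv1⟩, fun h => hv2 (by simpa [hi₁, Fin.ext_iff] using h),
          fun h => hv3 (by simpa [hi₂, Fin.ext_iff] using h)⟩
      have memcol : ∀ c : Fin n → A, c i₁ = c i₂ → c ∈ Aneq A n :=
        fun c hc => Or.inr ⟨i₁, i₂, hi12, hc⟩
      have memcol' : ∀ c : Fin n → A, c i₁ = c j₀ → c ∈ Aneq A n :=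
        fun c hc => Or.inr ⟨i₁, j₀, fun h => hj₀1 h.symm, hc⟩
      set T : Finset (Fin n) :=
        Finset.univ.filter (fun j => m ≤ (j : ℕ) ∧ j ≠ i₁ ∧ j ≠ i₂) with hT
      have hTmem : ∀ j : Fin n, j ∈ T ↔ m ≤ (j : ℕ) ∧ j ≠ i₁ ∧ j ≠ i₂ := by
        intro j; simp [hT]
      have hi₁T : i₁ ∉ T := by simp [hTmem]
      have hi₂T : i₂ ∉ T := by simp [hTmem]
      -- fill lemma
      have fill : ∀ T' : Finset (Fin n), (∀ j ∈ T', m ≤ (j : ℕ) ∧ j ≠ i₁ ∧ j ≠ i₂) →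
          ∀ c : Fin n → A, c i₁ = c i₂ →
          f c = f (fun j => if j ∈ T' then x₀ else c j) := by
        intro T'
        induction T' using Finset.induction_on with
        | empty => intro _ c _; simp
        | @insert j T'' hjT'' ih =>
          intro hTs c hc
          have hTs' : ∀ j' ∈ T'', m ≤ (j' : ℕ) ∧ j' ≠ i₁ ∧ j' ≠ i₂ :=
            fun j' hj' => hTs j' (Finset.mem_insert_of_mem hj')
          have hji : j ≠ i₁ ∧ j ≠ i₂ := (hTs j (Finset.mem_insert_self j T'')).2
          have h1T : i₁ ∉ T'' := fun h => (hTs' i₁ h).2.1 rfl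
          have h2T : i₂ ∉ T'' := fun h => (hTs' i₂ h).2.2 rfl
          rw [ih hTs' c hc]
          apply step
          · apply memcol
            simp [h1T, h2T, hc]
          · apply memcol
            simp [h1T, h2T, hji.1.symm, hji.2.symm, hc, Finset.mem_insert]
          · exact (hTs j (Finset.mem_insert_self j T'')).1
          · intro j' hj'
            by_cases h : j' ∈ T'' <;> simp [h, Finset.mem_insert, hj']
      -- normalization: f c = f (normal form of c)
      have toNorm : ∀ c : Fin n → A, c ∈ Aneq A n →
          f c = f (fun j => if (j : ℕ) < m then c j else x₀) := by
        intro c hc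
        set u := c i₁ with hu
        set c1 := Function.update c i₂ u with hc1
        have hc1col : c1 i₁ = c1 i₂ := by
          simp [hc1, Function.update_of_ne hi12, hu]
        have e1 : f c = f c1 := by
          apply step c c1 hc (memcol c1 hc1col) i₂ (by simp [hi₂])
          intro j hj
          simp [hc1, Function.update_of_ne hj]
        set c2 : Fin n → A := fun j => if j ∈ T then x₀ else c1 j with hc2
        have e2 : f c1 = f c2 := fill T (fun j hj => (hTmem j).1 hj) c1 hc1col
        have hc2i₁ : c2 i₁ = u := by
          simp [hc2, hi₁T, hc1, Function.update_of_ne hi12, hu]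
        have hc2i₂ : c2 i₂ = u := by simp [hc2, hi₂T, hc1]
        set w := c2 j₀ with hw
        set c3 := Function.update c2 i₁ w with hc3
        have hc3i₁ : c3 i₁ = w := by simp [hc3]
        have hc3j₀ : c3 j₀ = w := by simp [hc3, Function.update_of_ne hj₀1, hw]
        have e3 : f c2 = f c3 := by
          apply step c2 c3 (memcol c2 (hc2i₁.trans hc2i₂.symm))
            (memcol' c3 (hc3i₁.trans hc3j₀.symm)) i₁ (by simp [hi₁])
          intro j hj
          simp [hc3, Function.update_of_ne hj]
        set c4 := Function.update c3 i₂ x₀ with hc4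
        have hc4i₁ : c4 i₁ = w := by
          rw [hc4, Function.update_of_ne hi12, hc3i₁]
        have hc4j₀ : c4 j₀ = w := by
          rw [hc4, Function.update_of_ne hj₀2, hc3j₀]
        have e4 : f c3 = f c4 := by
          apply step c3 c4 (memcol' c3 (hc3i₁.trans hc3j₀.symm))
            (memcol' c4 (hc4i₁.trans hc4j₀.symm)) i₂ (by simp [hi₂])
          intro j hj
          simp [hc4, Function.update_of_ne hj]
        set c5 := Function.update c4 i₁ x₀ with hc5
        have hc5col : c5 i₁ = c5 i₂ := by
          simp [hc5, hc4, Function.update_of_ne hi12.symm]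
        have e5 : f c4 = f c5 := by
          apply step c4 c5 (memcol' c4 (hc4i₁.trans hc4j₀.symm)) (memcol c5 hc5col)
            i₁ (by simp [hi₁])
          intro j hj
          simp [hc5, Function.update_of_ne hj]
        have hfinal : c5 = fun j : Fin n => if (j : ℕ) < m then c j else x₀ := by
          funext j
          rcases eq_or_ne j i₁ with rfl | hj1
          · simp [hc5, hi₁]
          rcases eq_or_ne j i₂ with rfl | hj2
          · have : ¬ ((i₂ : ℕ) < m) := by simp [hi₂]
            simp [hc5, Function.update_of_ne hj1, hc4, this]
          · rw [hc5, Function.update_of_ne hj1, hc4, Function.update_of_ne hj2, hc3,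
              Function.update_of_ne hj1, hc2]
            by_cases hjm : m ≤ (j : ℕ)
            · have hjT : j ∈ T := (hTmem j).2 ⟨hjm, hj1, hj2⟩
              simp [hjT, Nat.not_lt.mpr hjm]
            · have hjT : j ∉ T := fun h => hjm ((hTmem j).1 h).1
              simp [hjT, hc1, Function.update_of_ne hj2, Nat.lt_of_not_le hjm]
        rw [e1, e2, e3, e4, e5, hfinal]
      rw [toNorm a ha, toNorm b hb]
      congr 1
      funext j
      by_cases hjm : (j : ℕ) < m
      · simp [hjm, hab j hjm]
      · simp [hjm]
    · -- exactly one free coordinate: n = m + 1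
      refine step a b ha hb ⟨m, by omega⟩ le_rfl (fun j hj => hab j ?_)
      have hjv : (j : ℕ) ≠ m := fun h => hj (Fin.ext h)
      have := j.isLt
      omega
  -- construct h
  refine ⟨fun g => if hg : ∃ a, a ∈ Aneq A n ∧ ∀ k : Fin m, a (Fin.castLE hm k) = g k
      then f hg.choose else f (fun _ => x₀), ?_⟩
  intro a ha
  have hgx : ∃ a', a' ∈ Aneq A n ∧
      ∀ k : Fin m, a' (Fin.castLE hm k) = a (Fin.castLE hm k) := ⟨a, ha, fun _ => rfl⟩
  show f a = if hg : ∃ a', a' ∈ Aneq A n ∧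
      ∀ k : Fin m, a' (Fin.castLE hm k) = a (Fin.castLE hm k)
    then f hg.choose else f (fun _ => x₀)
  rw [dif_pos hgx]
  obtain ⟨hc1, hc2⟩ := hgx.choose_spec
  refine key a _ ha hc1 (fun k hk => ?_)
  have h1 := hc2 ⟨(k : ℕ), hk⟩
  have h2 : Fin.castLE hm ⟨(k : ℕ), hk⟩ = k := by simp [Fin.ext_iff]
  rw [h2] at h1
  exact h1.symm
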